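/- arXiv:1212.1977 — 4 statements merged into one kernel-verified Lean document; each statement's English description precedes it below -/
import Mathlib

section
/- The Petersen graph admits a consecutive radio labeling, i.e., a bijection f from its 10 vertices to {1,...,10} such that |f(u)−f(v)| ≥ 3 − d(u,v) for all distinct vertices u,v. -/
/-- The Petersen graph, realized as the Kneser graph K(5,2): vertices are the
2-element subsets of a 5-element set, adjacent iff disjoint. -/
def petersenGraph : SimpleGraph {s : Finset (Fin 5) // s.card = 2} where
  Adj a b := Disjoint a.1 b.1
  symm := ⟨fun a b h => h.symm⟩
  loopless := by
    constructor
    rintro ⟨s, hs⟩ h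
    simp only [disjoint_self] at h
    simp [h] at hs

/-- The ten 2-subsets of `Fin 5`, ordered so that consecutive entries intersect. -/
private def PL : List (Finset (Fin 5)) :=
  [{0,1},{0,2},{0,3},{0,4},{1,4},{1,3},{1,2},{2,3},{2,4},{3,4}]

private lemma mem_PL : ∀ s : {s : Finset (Fin 5) // s.card = 2}, s.1 ∈ PL := by decide

private def pFun (s : {s : Finset (Fin 5) // s.card = 2}) : Fin 10 :=
  ⟨PL.idxOf s.1, by
    have := List.idxOf_lt_length_iff.2 (mem_PL s)
    simpa [PL] using this⟩

private lemma pFun_bij : Function.Bijective pFun := by decide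

private lemma adj_gap : ∀ u v : {s : Finset (Fin 5) // s.card = 2},
    Disjoint u.1 v.1 → (pFun u : ℕ) + 2 ≤ (pFun v : ℕ) ∨ (pFun v : ℕ) + 2 ≤ (pFun u : ℕ) := by
  decide

private lemma common_nbr : ∀ u v : {s : Finset (Fin 5) // s.card = 2},
    u ≠ v → ¬ Disjoint u.1 v.1 →
    ∃ w : {s : Finset (Fin 5) // s.card = 2}, Disjoint u.1 w.1 ∧ Disjoint w.1 v.1 := by
  decide

theorem petersen_consecutive_radio_labeling :
    ∃ f : {s : Finset (Fin 5) // s.card = 2} ≃ Fin 10,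
      ∀ u v, u ≠ v →
        (3 : ℤ) - petersenGraph.dist u v ≤
          |(((f u : ℕ) + 1 : ℕ) : ℤ) - (((f v : ℕ) + 1 : ℕ) : ℤ)| := by
  refine ⟨Equiv.ofBijective pFun pFun_bij, ?_⟩
  intro u v huv
  simp only [Equiv.ofBijective_apply]
  by_cases h : petersenGraph.Adj u v
  · have hd : petersenGraph.dist u v = 1 :=
      (SimpleGraph.dist_eq_one_iff_adj).2 h
    rw [hd]
    have h2 := adj_gap u v h
    rw [le_abs]
    push_cast
    omega
  · have hne : (pFun u : ℕ) ≠ (pFun v : ℕ) := by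
      intro hh
      exact huv (pFun_bij.1 (Fin.val_injective hh))
    obtain ⟨w, hw1, hw2⟩ := common_nbr u v huv h
    have hreach : petersenGraph.Reachable u v :=
      (SimpleGraph.Adj.reachable hw1).trans (SimpleGraph.Adj.reachable hw2)
    have hpos : 0 < petersenGraph.dist u v := hreach.pos_dist_of_ne huv
    have hne1 : petersenGraph.dist u v ≠ 1 := fun hh =>
      h ((SimpleGraph.dist_eq_one_iff_adj).1 hh)
    have h2 : 2 ≤ petersenGraph.dist u v := by omega
    have h2' : (2:ℤ) ≤ (petersenGraph.dist u v : ℤ) := by exact_mod_cast h2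
    have h1 : (1:ℤ) ≤ |(((pFun u : ℕ) + 1 : ℕ) : ℤ) - (((pFun v : ℕ) + 1 : ℕ) : ℤ)| := by
      rw [le_abs]; push_cast; omega
    linarith
end

section
/- For integers n ≥ 3 and 1 ≤ t ≤ n, the recursively defined sequence x_1,...,x_{n^t} of t-tuples over {v_1,...,v_n} — given by x^1_i = v_i and x^t_{mn+k} = (x^{t−1}_{⌊m/n⌋n+k}, v_{k+m−⌊m/n⌋ (mod n)}) for k = 1,...,n — is a bijective enumeration of all n^t vertices of K_n^t. -/
/-- The recursively defined ordering of the vertices of `K_n^t`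
(vertices are `t`-tuples over `Fin n`, where `k : Fin n` represents `v_(k+1)`;
indices `i` run over `1,…,n^t`).  It is given by `x^1_i = v_i` and
`x^t_{mn+k} = (x^{t-1}_{⌊m/n⌋·n+k}, v_{k+m-⌊m/n⌋ (mod n)})` for `k = 1,…,n`.
Here `i = m*n + k` with `k ∈ {1,…,n}`, so `m = (i-1)/n` and `k = (i-1) % n + 1`. -/
def xseq (n : ℕ) [NeZero n] : (t : ℕ) → ℕ → (Fin t → Fin n)
  | 0, _ => fun i => i.elim0
  | (t + 1), i =>
      Fin.snoc (xseq n t (((i - 1) / n / n) * n + (i - 1) % n + 1))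
        (Fin.ofNat n ((i - 1) % n + ((i - 1) / n - (i - 1) / n / n) : ℕ) : Fin n)

lemma xseq_inj {n : ℕ} [NeZero n] : ∀ t, ∀ j1 j2, j1 < n ^ t → j2 < n ^ t →
    xseq n t (j1 + 1) = xseq n t (j2 + 1) → j1 = j2 := by
  have hn : 0 < n := Nat.pos_of_ne_zero (NeZero.ne n)
  intro t
  induction t with
  | zero =>
    intro j1 j2 h1 h2 _
    simp only [pow_zero] at h1 h2
    omega
  | succ t ih =>
    intro j1 j2 h1 h2 heq
    simp only [xseq, Nat.add_sub_cancel] at heq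
    have hlast := congrArg (fun f => f (Fin.last t)) heq
    have hinit := congrArg (fun f => Fin.init f) heq
    simp only [Fin.snoc_last] at hlast
    simp only [Fin.init_snoc] at hinit
    have hvl := congrArg Fin.val hlast
    simp only [Fin.val_ofNat] at hvl
    -- hvl : (j1 % n + (j1/n - j1/n/n)) % n = (j2 % n + (j2/n - j2/n/n)) % n
    have hm1 : j1 % n < n := Nat.mod_lt j1 hn
    have hm2 : j2 % n < n := Nat.mod_lt j2 hn
    rcases Nat.eq_zero_or_pos t with ht | ht
    · subst ht
      have e1 : j1 / n = 0 := Nat.div_eq_of_lt (by simpa using h1)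
      have e2 : j2 / n = 0 := Nat.div_eq_of_lt (by simpa using h2)
      have e1' : j1 / n / n = 0 := by rw [e1]; exact Nat.zero_div n
      have e2' : j2 / n / n = 0 := by rw [e2]; exact Nat.zero_div n
      have b1 : j1 % n + (j1 / n - j1 / n / n) = j1 % n := by omega
      have b2 : j2 % n + (j2 / n - j2 / n / n) = j2 % n := by omega
      rw [b1, b2, Nat.mod_mod_of_dvd _ dvd_rfl, Nat.mod_mod_of_dvd _ dvd_rfl] at hvl
      have m1 : j1 % n = j1 := Nat.mod_eq_of_lt (by simpa using h1)
      have m2 : j2 % n = j2 := Nat.mod_eq_of_lt (by simpa using h2)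
      omega
    · -- inner indices are < n ^ t
      have hq1 : j1 / n < n ^ t := by
        rw [Nat.div_lt_iff_lt_mul hn]
        calc j1 < n ^ (t+1) := h1
          _ = n ^ t * n := by ring
      have hq2 : j2 / n < n ^ t := by
        rw [Nat.div_lt_iff_lt_mul hn]
        calc j2 < n ^ (t+1) := h2
          _ = n ^ t * n := by ring
      have hpow : n ^ (t - 1) * n = n ^ t := by
        rw [← pow_succ]; congr 1; omega
      have hqq1 : j1 / n / n < n ^ (t - 1) := by
        rw [Nat.div_lt_iff_lt_mul hn, hpow]; exact hq1
      have hqq2 : j2 / n / n < n ^ (t - 1) := by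
        rw [Nat.div_lt_iff_lt_mul hn, hpow]; exact hq2
      have hin1 : j1 / n / n * n + j1 % n < n ^ t := by
        have : j1 / n / n * n + n ≤ n ^ (t - 1) * n := by
          calc j1 / n / n * n + n = (j1 / n / n + 1) * n := by ring
            _ ≤ n ^ (t - 1) * n := Nat.mul_le_mul_right n (Nat.succ_le_of_lt hqq1)
        omega
      have hin2 : j2 / n / n * n + j2 % n < n ^ t := by
        have : j2 / n / n * n + n ≤ n ^ (t - 1) * n := by
          calc j2 / n / n * n + n = (j2 / n / n + 1) * n := by ring
            _ ≤ n ^ (t - 1) * n := Nat.mul_le_mul_right n (Nat.succ_le_of_lt hqq2)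
        omega
      have hinner := ih _ _ hin1 hin2 hinit
      -- extract equality of remainders and of q/n from hinner
      have hqq : j1 / n / n = j2 / n / n := by
        have c := congrArg (· / n) hinner
        beta_reduce at c
        rw [Nat.add_comm (j1 / n / n * n), Nat.add_comm (j2 / n / n * n),
          Nat.add_mul_div_right _ _ hn, Nat.add_mul_div_right _ _ hn,
          Nat.div_eq_of_lt hm1, Nat.div_eq_of_lt hm2] at c
        simpa using c
      have hr : j1 % n = j2 % n := by rw [hqq] at hinner; omega
      -- rewrite the last-coordinate equation into a cancellable form
      have hdm1 : n * (j1 / n / n) + (j1 / n) % n = j1 / n := Nat.div_add_mod _ n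
      have hdm2 : n * (j2 / n / n) + (j2 / n) % n = j2 / n := Nat.div_add_mod _ n
      have hle1 : j1 / n / n ≤ n * (j1 / n / n) := Nat.le_mul_of_pos_left _ hn
      have hle2 : j2 / n / n ≤ n * (j2 / n / n) := Nat.le_mul_of_pos_left _ hn
      have key1 : j1 % n + (j1 / n - j1 / n / n)
          = (j1 % n + (j1 / n) % n) + (n * (j1 / n / n) - j1 / n / n) := by omega
      have key2 : j2 % n + (j2 / n - j2 / n / n)
          = (j2 % n + (j2 / n) % n) + (n * (j2 / n / n) - j2 / n / n) := by omega
      rw [key1, key2, hqq] at hvl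
      have hmeq : (j1 % n + (j1 / n) % n) ≡ (j2 % n + (j2 / n) % n) [MOD n] :=
        Nat.ModEq.add_right_cancel' _ hvl
      rw [hr] at hmeq
      have hu : (j1 / n) % n ≡ (j2 / n) % n [MOD n] :=
        Nat.ModEq.add_left_cancel' _ hmeq
      have hu' : (j1 / n) % n = (j2 / n) % n := by
        have b1 : (j1 / n) % n % n = (j1 / n) % n := Nat.mod_mod_of_dvd _ dvd_rfl
        have b2 : (j2 / n) % n % n = (j2 / n) % n := Nat.mod_mod_of_dvd _ dvd_rfl
        have := hu
        unfold Nat.ModEq at this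
        omega
      have hq : j1 / n = j2 / n := by rw [hqq] at hdm1; omega
      have hfin1 : n * (j1 / n) + j1 % n = j1 := Nat.div_add_mod j1 n
      have hfin2 : n * (j2 / n) + j2 % n = j2 := Nat.div_add_mod j2 n
      rw [hq] at hfin1
      omega

theorem xseq_bijOn {n t : ℕ} [NeZero n] (hn : 3 ≤ n) (ht1 : 1 ≤ t) (htn : t ≤ n) :
    Set.BijOn (xseq n t) (Set.Icc 1 (n ^ t)) Set.univ := by
  have hn0 : 0 < n := Nat.pos_of_ne_zero (NeZero.ne n)
  have hsurj : Function.Surjective (fun k : Fin (n ^ t) => xseq n t (k + 1)) := by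
    have hinj : Function.Injective (fun k : Fin (n ^ t) => xseq n t (k + 1)) := by
      intro a b hab
      exact Fin.ext (xseq_inj t a b a.isLt b.isLt hab)
    have hcard : Fintype.card (Fin (n ^ t)) = Fintype.card (Fin t → Fin n) := by
      simp
    exact ((Fintype.bijective_iff_injective_and_card _).2 ⟨hinj, hcard⟩).2
  refine ⟨fun _ _ => trivial, ?_, ?_⟩
  · intro i1 h1 i2 h2 heq
    simp only [Set.mem_Icc] at h1 h2
    have e1 : i1 = (i1 - 1) + 1 := by omega
    have e2 : i2 = (i2 - 1) + 1 := by omega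
    rw [e1, e2] at heq
    have := xseq_inj t (i1 - 1) (i2 - 1) (by omega) (by omega) heq
    omega
  · intro v _
    obtain ⟨k, hk⟩ := hsurj v
    exact ⟨(k : ℕ) + 1, Set.mem_Icc.2 ⟨by omega, by have := k.isLt; omega⟩, hk⟩
end

section
/- For integers n ≥ 3 and 1 ≤ t ≤ n, the graph K_n^t has a consecutive radio labeling; equivalently, rn(K_n^t) = n^t. -/
/-- The `t`-fold Cartesian product power of a graph `G`. -/
def SimpleGraph.cartPow {V : Type*} (G : SimpleGraph V) (t : ℕ) :
    SimpleGraph (Fin t → V) where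
  Adj x y := ∃ a, G.Adj (x a) (y a) ∧ ∀ k, k ≠ a → x k = y k
  symm := by
    constructor
    rintro x y ⟨a, h, hk⟩
    exact ⟨a, h.symm, fun k hk' => (hk k hk').symm⟩
  loopless := by
    constructor
    rintro x ⟨a, h, -⟩
    exact G.ne_of_adj h rfl


namespace CRL

def dig (n m j : ℕ) : ℕ := m / n ^ j % n

def Xlab (n m k : ℕ) : ZMod n :=
  (dig n m 0 : ZMod n) + if k = 0 then 0 else ((dig n m k : ZMod n) - (dig n m (k+1) : ZMod n))

lemma dig_cast (n m j : ℕ) : ((dig n m j : ℕ) : ZMod n) = ((m / n ^ j : ℕ) : ZMod n) :=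
  ZMod.natCast_mod _ _

lemma Xlab_zero (n m : ℕ) : Xlab n m 0 = (m : ZMod n) := by
  simp [Xlab, dig, ZMod.natCast_mod]

lemma Xlab_pos (n m k : ℕ) (hk : k ≠ 0) :
    Xlab n m k = (m : ZMod n) + (((m / n ^ k : ℕ) : ZMod n) - ((m / n ^ (k+1) : ℕ) : ZMod n)) := by
  simp [Xlab, dig, hk, ZMod.natCast_mod]

lemma div_pow_add (n m j i : ℕ) : m / n ^ (j + i) = (m / n ^ j) / n ^ i := by
  rw [pow_add, Nat.div_div_eq_div_mul]

lemma eq_div_mono {n m s j j' : ℕ} (h : (m + s) / n ^ j = m / n ^ j) (hjj' : j ≤ j') :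
    (m + s) / n ^ j' = m / n ^ j' := by
  obtain ⟨i, rfl⟩ := Nat.exists_eq_add_of_le hjj'
  rw [div_pow_add, div_pow_add, h]

lemma div_add_of_lt {a s q : ℕ} (hq : 0 < q) (hs : s < q) :
    (a + s) / q = a / q ∨ (a + s) / q = a / q + 1 := by
  have h1 : a / q ≤ (a + s) / q := Nat.div_le_div_right (by omega)
  have h2 : (a + s) / q < a / q + 2 := by
    rw [Nat.div_lt_iff_lt_mul hq]
    have := Nat.div_add_mod a q
    have := Nat.mod_lt a hq
    nlinarith
  omega

end CRL

namespace CRL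

lemma digits_eq {n : ℕ} (hn : 0 < n) :
    ∀ (t m m' : ℕ), m < n ^ t → m' < n ^ t → (∀ j, dig n m j = dig n m' j) → m = m' := by
  intro t
  induction t with
  | zero => intro m m' hm hm' _; simp at hm hm'; omega
  | succ t ih =>
    intro m m' hm hm' h
    have h0 : m % n = m' % n := by
      have := h 0; simpa [dig] using this
    have hd : m / n = m' / n := by
      apply ih
      · rw [Nat.div_lt_iff_lt_mul hn]; rw [pow_succ] at hm; exact hm
      · rw [Nat.div_lt_iff_lt_mul hn]; rw [pow_succ] at hm'; exact hm'
      · intro j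
        have := h (j + 1)
        have e1 : m / n / n ^ j = m / n ^ (j + 1) := by
          rw [Nat.div_div_eq_div_mul, ← pow_succ']
        have e2 : m' / n / n ^ j = m' / n ^ (j + 1) := by
          rw [Nat.div_div_eq_div_mul, ← pow_succ']
        simpa [dig, e1, e2] using this
    calc m = n * (m / n) + m % n := (Nat.div_add_mod m n).symm
    _ = n * (m' / n) + m' % n := by rw [hd, h0]
    _ = m' := Nat.div_add_mod m' n

lemma zdigits {n : ℕ} [NeZero n] {t m m' : ℕ} (hm : m < n ^ t) (hm' : m' < n ^ t)
    (h : ∀ k, k < t → Xlab n m k = Xlab n m' k) (ht : 0 < t) :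
    ∀ j, ((dig n m j : ℕ) : ZMod n) = ((dig n m' j : ℕ) : ZMod n) := by
  have h0 : (m : ZMod n) = (m' : ZMod n) := by
    have := h 0 ht; rwa [Xlab_zero, Xlab_zero] at this
  have key : ∀ i, ((dig n m (t - i) : ℕ) : ZMod n) = ((dig n m' (t - i) : ℕ) : ZMod n) := by
    intro i
    induction i with
    | zero =>
      have e1 : dig n m (t - 0) = 0 := by
        simp [dig, Nat.div_eq_of_lt hm]
      have e2 : dig n m' (t - 0) = 0 := by
        simp [dig, Nat.div_eq_of_lt hm']
      rw [e1, e2]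
    | succ i ih =>
      by_cases hj0 : t - (i + 1) = 0
      · rw [hj0, dig_cast, dig_cast]
        simpa using h0
      · have hjt : t - (i + 1) < t := by omega
        have hx := h _ hjt
        rw [Xlab_pos _ _ _ hj0, Xlab_pos _ _ _ hj0] at hx
        have hsucc : t - (i + 1) + 1 = t - i := by omega
        rw [hsucc] at hx
        rw [dig_cast, dig_cast] at ih
        rw [dig_cast, dig_cast]
        linear_combination hx - h0 + ih
  intro j
  rcases Nat.lt_or_ge j t with hj | hj
  · have : t - (t - j) = j := by omega
    rw [← this]; exact key (t - j)
  · have hn : 0 < n := Nat.pos_of_ne_zero (NeZero.ne n)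
    have e1 : dig n m j = 0 := by
      have : m / n ^ j = 0 := Nat.div_eq_of_lt (lt_of_lt_of_le hm (Nat.pow_le_pow_right hn hj))
      simp [dig, this]
    have e2 : dig n m' j = 0 := by
      have : m' / n ^ j = 0 := Nat.div_eq_of_lt (lt_of_lt_of_le hm' (Nat.pow_le_pow_right hn hj))
      simp [dig, this]
    rw [e1, e2]

lemma Xlab_inj {n : ℕ} [NeZero n] {t m m' : ℕ} (hm : m < n ^ t) (hm' : m' < n ^ t)
    (h : ∀ k, k < t → Xlab n m k = Xlab n m' k) : m = m' := by
  have hn : 0 < n := Nat.pos_of_ne_zero (NeZero.ne n)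
  rcases Nat.eq_zero_or_pos t with rfl | ht
  · simp at hm hm'; omega
  · apply digits_eq hn t m m' hm hm'
    intro j
    have hz := zdigits hm hm' h ht j
    have d1 : dig n m j < n := Nat.mod_lt _ hn
    have d2 : dig n m' j < n := Nat.mod_lt _ hn
    have := congrArg ZMod.val hz
    rwa [ZMod.val_cast_of_lt d1, ZMod.val_cast_of_lt d2] at this

end CRL

namespace CRL

lemma not_agree_zero {n m s : ℕ} (hs1 : 0 < s) (hsn : s < n) :
    Xlab n m 0 ≠ Xlab n (m + s) 0 := by
  intro h
  rw [Xlab_zero, Xlab_zero] at h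
  have hz : ((s : ℕ) : ZMod n) = 0 := by
    push_cast at h ⊢
    linear_combination -h
  have := (ZMod.natCast_eq_zero_iff s n).mp hz
  have := Nat.le_of_dvd hs1 this
  omega

lemma agree_case {n m s j : ℕ} (hs1 : 0 < s) (hsn : s < n) (hj : j ≠ 0)
    (h : Xlab n m j = Xlab n (m + s) j) :
    n ∣ (s + 1) ∧ (m + s) / n ^ j = m / n ^ j + 1 ∧ (m + s) / n ^ (j + 1) = m / n ^ (j + 1) := by
  have hn : 0 < n := by omega
  have hnj : s < n ^ j := lt_of_lt_of_le hsn (Nat.le_self_pow hj n)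
  have hnj1 : s < n ^ (j + 1) := lt_of_lt_of_le hsn (Nat.le_self_pow (by omega) n)
  rw [Xlab_pos _ _ _ hj, Xlab_pos _ _ _ hj] at h
  rcases div_add_of_lt (pow_pos hn j) hnj with h1 | h1
  · have h2 : (m + s) / n ^ (j + 1) = m / n ^ (j + 1) := eq_div_mono h1 (by omega)
    rw [h1, h2] at h
    exfalso
    have hz : ((s : ℕ) : ZMod n) = 0 := by
      push_cast at h ⊢
      linear_combination -h
    have := Nat.le_of_dvd hs1 ((ZMod.natCast_eq_zero_iff s n).mp hz)
    omega
  · rcases div_add_of_lt (pow_pos hn (j+1)) hnj1 with h2 | h2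
    · refine ⟨?_, h1, h2⟩
      rw [h1, h2] at h
      have hz : ((s + 1 : ℕ) : ZMod n) = 0 := by
        push_cast at h ⊢
        linear_combination -h
      exact (ZMod.natCast_eq_zero_iff (s+1) n).mp hz
    · exfalso
      rw [h1, h2] at h
      have hz : ((s : ℕ) : ZMod n) = 0 := by
        push_cast at h ⊢
        linear_combination -h
      have := Nat.le_of_dvd hs1 ((ZMod.natCast_eq_zero_iff s n).mp hz)
      omega

def glab (n t : ℕ) [NeZero n] (m : ℕ) : Fin t → Fin n :=
  fun k => ⟨(Xlab n m (k : ℕ)).val, ZMod.val_lt _⟩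

lemma glab_eq_iff {n t : ℕ} [NeZero n] {m m' : ℕ} {k : Fin t} :
    glab n t m k = glab n t m' k ↔ Xlab n m (k : ℕ) = Xlab n m' (k : ℕ) := by
  constructor
  · intro h
    exact ZMod.val_injective n (congrArg Fin.val h)
  · intro h
    simp [glab, h]

lemma glab_inj {n t : ℕ} [NeZero n] {m m' : ℕ} (hm : m < n ^ t) (hm' : m' < n ^ t)
    (h : glab n t m = glab n t m') : m = m' := by
  apply Xlab_inj hm hm'
  intro k hk
  exact glab_eq_iff.mp (congrFun h ⟨k, hk⟩)

lemma hamming_key {n : ℕ} [NeZero n] (t m s : ℕ) (hs1 : 0 < s) (hsn : s < n) :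
    t ≤ hammingDist (glab n t m) (glab n t (m + s)) + (if n ∣ (s + 1) then 1 else 0) := by
  classical
  have hsplit := Finset.card_filter_add_card_filter_not
    (s := (Finset.univ : Finset (Fin t)))
    (p := fun k : Fin t => glab n t m k = glab n t (m + s) k)
  rw [Finset.card_univ, Fintype.card_fin] at hsplit
  have hham : hammingDist (glab n t m) (glab n t (m + s)) =
      (Finset.univ.filter fun k : Fin t => ¬ (glab n t m k = glab n t (m + s) k)).card := by
    rfl
  rw [hham]
  have hA : (Finset.univ.filter fun k : Fin t =>
      glab n t m k = glab n t (m + s) k).card ≤ (if n ∣ (s + 1) then 1 else 0) := by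
    split_ifs with hd
    · rw [Finset.card_le_one]
      intro a ha b hb
      simp only [Finset.mem_filter] at ha hb
      have ha' := glab_eq_iff.mp ha.2
      have hb' := glab_eq_iff.mp hb.2
      have ha0 : (a : ℕ) ≠ 0 := by
        intro h0; exact not_agree_zero hs1 hsn (h0 ▸ ha')
      have hb0 : (b : ℕ) ≠ 0 := by
        intro h0; exact not_agree_zero hs1 hsn (h0 ▸ hb')
      obtain ⟨-, ha1, ha2⟩ := agree_case hs1 hsn ha0 ha'
      obtain ⟨-, hb1, hb2⟩ := agree_case hs1 hsn hb0 hb'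
      by_contra hne
      rcases Nat.lt_or_ge (a : ℕ) (b : ℕ) with hab | hab
      · have := eq_div_mono ha2 (show (a:ℕ) + 1 ≤ (b:ℕ) by omega)
        omega
      · have hab' : (b : ℕ) < (a : ℕ) := by
          rcases Nat.lt_or_ge (b:ℕ) (a:ℕ) with h | h
          · exact h
          · exact absurd (Fin.ext (by omega)) hne
        have := eq_div_mono hb2 (show (b:ℕ) + 1 ≤ (a:ℕ) by omega)
        omega
    · have he : (Finset.univ.filter fun k : Fin t =>
          glab n t m k = glab n t (m + s) k) = ∅ := by
        ext a
        simp only [Finset.mem_filter, Finset.mem_univ, true_and, Finset.notMem_empty, iff_false]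
        intro ha
        have ha' := glab_eq_iff.mp ha
        by_cases h0 : (a : ℕ) = 0
        · exact not_agree_zero hs1 hsn (h0 ▸ ha')
        · exact hd (agree_case hs1 hsn h0 ha').1
      simp [he]
  omega

end CRL

abbrev CRL.GP (n t : ℕ) : SimpleGraph (Fin t → Fin n) := (⊤ : SimpleGraph (Fin n)).cartPow t
namespace CRL

lemma hamming_le_one_of_adj {x y : Fin t → Fin n} (h : (GP n t).Adj x y) :
    hammingDist x y ≤ 1 := by
  obtain ⟨a, -, hk⟩ := h
  classical
  have : (Finset.univ.filter fun i : Fin t => x i ≠ y i) ⊆ {a} := by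
    intro k hk'
    simp only [Finset.mem_filter] at hk'
    simp only [Finset.mem_singleton]
    by_contra hka
    exact hk'.2 (hk k hka)
  calc hammingDist x y = (Finset.univ.filter fun i : Fin t => x i ≠ y i).card := rfl
  _ ≤ ({a} : Finset (Fin t)).card := Finset.card_le_card this
  _ = 1 := Finset.card_singleton a

lemma hamming_le_length {x y : Fin t → Fin n} (w : (GP n t).Walk x y) :
    hammingDist x y ≤ w.length := by
  induction w with
  | nil => simp
  | cons h p ih =>
    calc hammingDist _ _ ≤ hammingDist _ _ + hammingDist _ _ := hammingDist_triangle _ _ _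
    _ ≤ 1 + p.length := Nat.add_le_add (hamming_le_one_of_adj h) ih
    _ = (SimpleGraph.Walk.cons h p).length := by
      rw [SimpleGraph.Walk.length_cons]; omega

lemma exists_walk_le : ∀ (N : ℕ) (x y : Fin t → Fin n), hammingDist x y ≤ N →
    ∃ w : (GP n t).Walk x y, w.length ≤ N := by
  intro N
  induction N with
  | zero =>
    intro x y h
    have : x = y := hammingDist_eq_zero.mp (by omega)
    subst this
    exact ⟨SimpleGraph.Walk.nil, by simp⟩
  | succ N ih =>
    intro x y h
    by_cases hxy : x = y
    · subst hxy; exact ⟨SimpleGraph.Walk.nil, by simp⟩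
    · obtain ⟨a, ha⟩ := Function.ne_iff.mp hxy
      classical
      set x' := Function.update x a (y a) with hx'
      have hadj : (GP n t).Adj x x' := by
        refine ⟨a, ?_, ?_⟩
        · simpa [hx', Function.update_self] using ha
        · intro k hk
          simp [hx', Function.update_of_ne hk]
      have hfilter : (Finset.univ.filter fun i : Fin t => x' i ≠ y i) =
          (Finset.univ.filter fun i : Fin t => x i ≠ y i).erase a := by
        ext k
        by_cases hka : k = a
        · subst hka
          simp [hx', Function.update_self]
        · simp [hx', Function.update_of_ne hka, hka, Finset.mem_erase]
      have hmem : a ∈ (Finset.univ.filter fun i : Fin t => x i ≠ y i) := by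
        simp [ha]
      have hlt : hammingDist x' y < hammingDist x y := by
        have : hammingDist x' y = (Finset.univ.filter fun i : Fin t => x i ≠ y i).card - 1 := by
          show (Finset.univ.filter fun i : Fin t => x' i ≠ y i).card = _
          rw [hfilter, Finset.card_erase_of_mem hmem]
        have hpos : 0 < (Finset.univ.filter fun i : Fin t => x i ≠ y i).card :=
          Finset.card_pos.mpr ⟨a, hmem⟩
        have hh : hammingDist x y = (Finset.univ.filter fun i : Fin t => x i ≠ y i).card := rfl
        omega
      obtain ⟨w, hw⟩ := ih x' y (by omega)
      exact ⟨SimpleGraph.Walk.cons hadj w, by rw [SimpleGraph.Walk.length_cons]; omega⟩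

lemma dist_eq_hamming (x y : Fin t → Fin n) :
    (GP n t).dist x y = hammingDist x y := by
  obtain ⟨w, hw⟩ := exists_walk_le (hammingDist x y) x y le_rfl
  apply le_antisymm
  · exact (SimpleGraph.dist_le w).trans hw
  · obtain ⟨p, hp⟩ := SimpleGraph.Reachable.exists_walk_length_eq_dist ⟨w⟩
    rw [← hp]
    exact hamming_le_length p

end CRL

namespace CRL

lemma main_ineq {n t : ℕ} [NeZero n] (hn : 3 ≤ n) (ht1 : 1 ≤ t) (htn : t ≤ n)
    {i j : ℕ} (hij : i < j) (hjlt : j < n ^ t) :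
    (t : ℤ) + 1 - ((GP n t).dist (glab n t i) (glab n t j) : ℤ) ≤ (j : ℤ) - (i : ℤ) := by
  have hham1 : 1 ≤ hammingDist (glab n t i) (glab n t j) := by
    rcases Nat.eq_zero_or_pos (hammingDist (glab n t i) (glab n t j)) with h | h
    · exfalso
      have := glab_inj (n := n) (t := t) (by omega) hjlt (hammingDist_eq_zero.mp h)
      omega
    · exact h
  rw [dist_eq_hamming]
  set s := j - i with hs
  have hjs : j = i + s := by omega
  rcases Nat.lt_or_ge s t with hst | hst
  · have hsn : s < n := by omega
    have hkey := hamming_key (n := n) t i s (by omega) hsn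
    rw [← hjs] at hkey
    split_ifs at hkey with hd
    · have hsge : 2 ≤ s := by
        have := Nat.le_of_dvd (by omega) hd
        omega
      omega
    · omega
  · omega

end CRL

theorem cartPow_complete_consecutive_radio_labeling {n t : ℕ} (hn : 3 ≤ n)
    (ht1 : 1 ≤ t) (htn : t ≤ n) :
    (∃ f : (Fin t → Fin n) ≃ Fin (n ^ t),
        ∀ x y : Fin t → Fin n, x ≠ y →
          (t : ℤ) + 1 - ((⊤ : SimpleGraph (Fin n)).cartPow t).dist x y ≤
            |(((f x : ℕ) + 1 : ℕ) : ℤ) - (((f y : ℕ) + 1 : ℕ) : ℤ)|) ∧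
      sInf {m : ℕ | ∃ f : (Fin t → Fin n) → ℕ, (∀ x, 1 ≤ f x) ∧ (∀ x, f x ≤ m) ∧
        ∀ x y : Fin t → Fin n, x ≠ y →
          (t : ℤ) + 1 - ((⊤ : SimpleGraph (Fin n)).cartPow t).dist x y ≤
            |(f x : ℤ) - (f y : ℤ)|} = n ^ t := by
  haveI : NeZero n := ⟨by omega⟩
  classical
  have hcard : Fintype.card (Fin t → Fin n) = n ^ t := by
    simp [Fintype.card_fun]
  set gl : Fin (n ^ t) → (Fin t → Fin n) := fun m => CRL.glab n t m with hgl
  have hinj : Function.Injective gl := by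
    intro a b hab
    exact Fin.ext (CRL.glab_inj a.isLt b.isLt hab)
  have hbij : Function.Bijective gl := by
    rw [Fintype.bijective_iff_injective_and_card]
    exact ⟨hinj, by simp [hcard]⟩
  set e : Fin (n ^ t) ≃ (Fin t → Fin n) := Equiv.ofBijective gl hbij with he
  have heap : ∀ i : Fin (n ^ t), e i = CRL.glab n t (i : ℕ) := fun i => rfl
  have hmain : ∀ x y : Fin t → Fin n, x ≠ y →
      (t : ℤ) + 1 - ((⊤ : SimpleGraph (Fin n)).cartPow t).dist x y ≤
        |(((e.symm x : Fin (n ^ t)) : ℕ) : ℤ) - (((e.symm y : Fin (n ^ t)) : ℕ) : ℤ)| := by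
    intro x y hxy
    have hx : x = CRL.glab n t ((e.symm x : Fin (n ^ t)) : ℕ) :=
      (e.apply_symm_apply x).symm.trans (heap _)
    have hy : y = CRL.glab n t ((e.symm y : Fin (n ^ t)) : ℕ) :=
      (e.apply_symm_apply y).symm.trans (heap _)
    set i := ((e.symm x : Fin (n ^ t)) : ℕ)
    set j := ((e.symm y : Fin (n ^ t)) : ℕ)
    have hij : i ≠ j := by
      intro h
      exact hxy (by rw [hx, hy, h])
    rcases Nat.lt_or_ge i j with hlt | hge
    · have := CRL.main_ineq hn ht1 htn hlt (e.symm y).isLt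
      rw [← hx, ← hy] at this
      calc (t : ℤ) + 1 - ((⊤ : SimpleGraph (Fin n)).cartPow t).dist x y
          ≤ (j : ℤ) - (i : ℤ) := this
        _ = -((i : ℤ) - (j : ℤ)) := by ring
        _ ≤ |(i : ℤ) - (j : ℤ)| := neg_le_abs _
    · have hlt : j < i := by omega
      have := CRL.main_ineq hn ht1 htn hlt (e.symm x).isLt
      rw [← hx, ← hy, SimpleGraph.dist_comm] at this
      calc (t : ℤ) + 1 - ((⊤ : SimpleGraph (Fin n)).cartPow t).dist x y
          ≤ (i : ℤ) - (j : ℤ) := this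
        _ ≤ |(i : ℤ) - (j : ℤ)| := le_abs_self _
  have hdist_le : ∀ x y : Fin t → Fin n,
      ((⊤ : SimpleGraph (Fin n)).cartPow t).dist x y ≤ t := by
    intro x y
    rw [CRL.dist_eq_hamming]
    simpa using hammingDist_le_card_fintype (x := x) (y := y)
  constructor
  · refine ⟨e.symm, ?_⟩
    intro x y hxy
    have := hmain x y hxy
    have habs : |((((e.symm x : Fin (n ^ t)) : ℕ) + 1 : ℕ) : ℤ) -
        ((((e.symm y : Fin (n ^ t)) : ℕ) + 1 : ℕ) : ℤ)| =
        |(((e.symm x : Fin (n ^ t)) : ℕ) : ℤ) - (((e.symm y : Fin (n ^ t)) : ℕ) : ℤ)| := by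
      push_cast
      ring_nf
    rw [habs]
    exact this
  · apply le_antisymm
    · apply Nat.sInf_le
      refine ⟨fun x => ((e.symm x : Fin (n ^ t)) : ℕ) + 1, fun x => by
          show 1 ≤ ((e.symm x : Fin (n ^ t)) : ℕ) + 1; omega,
        fun x => by
          show ((e.symm x : Fin (n ^ t)) : ℕ) + 1 ≤ n ^ t
          have := (e.symm x).isLt; omega, ?_⟩
      intro x y hxy
      have := hmain x y hxy
      have habs : |((((e.symm x : Fin (n ^ t)) : ℕ) + 1 : ℕ) : ℤ) -
          ((((e.symm y : Fin (n ^ t)) : ℕ) + 1 : ℕ) : ℤ)| =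
          |(((e.symm x : Fin (n ^ t)) : ℕ) : ℤ) - (((e.symm y : Fin (n ^ t)) : ℕ) : ℤ)| := by
        push_cast
        ring_nf
      rw [habs]
      exact this
    · apply le_csInf
      · refine ⟨n ^ t, fun x => ((e.symm x : Fin (n ^ t)) : ℕ) + 1, fun x => by
            show 1 ≤ ((e.symm x : Fin (n ^ t)) : ℕ) + 1; omega,
          fun x => by
            show ((e.symm x : Fin (n ^ t)) : ℕ) + 1 ≤ n ^ t
            have := (e.symm x).isLt; omega, ?_⟩
        intro x y hxy
        have := hmain x y hxy
        have habs : |((((e.symm x : Fin (n ^ t)) : ℕ) : ℤ) + 1) -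
            ((((e.symm y : Fin (n ^ t)) : ℕ) : ℤ) + 1)| =
            |(((e.symm x : Fin (n ^ t)) : ℕ) : ℤ) - (((e.symm y : Fin (n ^ t)) : ℕ) : ℤ)| := by
          ring_nf
        push_cast
        rw [habs]
        exact this
      · intro b hb
        obtain ⟨f, hf1, hf2, hfr⟩ := hb
        have hinjf : Function.Injective f := by
          intro x y hfxy
          by_contra hxy
          have h1 := hfr x y hxy
          have h2 := hdist_le x y
          rw [hfxy] at h1
          simp at h1
          omega
        have hFinj : Function.Injective (fun x => (⟨f x - 1, by
            have := hf1 x; have := hf2 x; omega⟩ : Fin b)) := by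
          intro x y hxy
          apply hinjf
          have := congrArg Fin.val hxy
          simp at this
          have := hf1 x
          have := hf1 y
          omega
        have := Fintype.card_le_of_injective _ hFinj
        rw [hcard] at this
        simpa using this
end

section
/- Let n ≥ 3, 1 ≤ t ≤ n, and let x_1,...,x_{n^t} be the ordering of V(K_n^t) defined via the matrices A^1,...,A^{n^{t-1}}. Then for all i and all 1 ≤ s ≤ t−1, the number e_{i,i+s} of coordinates in which x_i and x_{i+s} agree satisfies e_{i,i+s} ≤ s − 1. In particular, consecutive vertices x_i and x_{i+1} agree in no coordinate. -/
lemma modne (n x d : ℕ) (h1 : 1 ≤ d) (h2 : d < n) : (x + d) % n ≠ x % n := by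
  have hn : 0 < n := by omega
  have h3 : (x + d) % n = (x % n + d) % n := by
    conv_lhs => rw [Nat.add_mod, Nat.mod_eq_of_lt h2]
  have hu : x % n < n := Nat.mod_lt _ hn
  rw [h3]
  rcases lt_or_ge (x % n + d) n with h | h
  · rw [Nat.mod_eq_of_lt h]; omega
  · have h4 : (x % n + d) % n = (x % n + d - n) % n := Nat.mod_eq_sub_mod h
    rw [h4, Nat.mod_eq_of_lt (by omega)]; omega

lemma castne (n x d : ℕ) [NeZero n] (h1 : 1 ≤ d) (h2 : d < n) :
    Fin.ofNat n (x + d : ℕ) ≠ Fin.ofNat n (x : ℕ) := by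
  intro h
  apply modne n x d h1 h2
  have h' := congrArg Fin.val h
  rwa [Fin.val_ofNat, Fin.val_ofNat] at h'

lemma allne {β : Type*} {t : ℕ} (f g : Fin t → β) (u v : β)
    (hp : ∀ j, f j ≠ g j) (hl : u ≠ v) :
    ∀ j : Fin (t+1), (Fin.snoc f u : Fin (t+1) → β) j ≠ (Fin.snoc g v : Fin (t+1) → β) j := by
  intro j; refine Fin.lastCases ?_ ?_ j
  · simpa using hl
  · intro k; simpa using hp k

lemma card_snoc_le_one_left {β : Type*} [DecidableEq β] {t : ℕ} (f g : Fin t → β) (u v : β)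
    (hp : ∀ j, f j ≠ g j) :
    (Finset.univ.filter fun j : Fin (t+1) =>
        (Fin.snoc f u : Fin (t+1) → β) j = (Fin.snoc g v : Fin (t+1) → β) j).card ≤ 1 := by
  have hsub : (Finset.univ.filter fun j : Fin (t+1) =>
      (Fin.snoc f u : Fin (t+1) → β) j = (Fin.snoc g v : Fin (t+1) → β) j) ⊆ {Fin.last t} := by
    intro j hj
    rw [Finset.mem_filter] at hj
    rcases eq_or_ne j (Fin.last t) with rfl | hne
    · simp
    · obtain ⟨k, rfl⟩ := Fin.exists_castSucc_eq.2 hne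
      rw [Fin.snoc_castSucc, Fin.snoc_castSucc] at hj
      exact absurd hj.2 (hp k)
  simpa using Finset.card_le_card hsub

lemma card_snoc_le_of_last {β : Type*} [DecidableEq β] {t : ℕ} (f g : Fin t → β) (u v : β)
    (hl : u ≠ v) (h : (Finset.univ.filter fun j => f j = g j).card ≤ 1) :
    (Finset.univ.filter fun j : Fin (t+1) =>
        (Fin.snoc f u : Fin (t+1) → β) j = (Fin.snoc g v : Fin (t+1) → β) j).card ≤ 1 := by
  have hsub : (Finset.univ.filter fun j : Fin (t+1) =>
      (Fin.snoc f u : Fin (t+1) → β) j = (Fin.snoc g v : Fin (t+1) → β) j) ⊆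
      Finset.image Fin.castSucc (Finset.univ.filter fun j => f j = g j) := by
    intro j hj
    rw [Finset.mem_filter] at hj
    rcases eq_or_ne j (Fin.last t) with rfl | hne
    · rw [Fin.snoc_last, Fin.snoc_last] at hj; exact absurd hj.2 hl
    · obtain ⟨k, rfl⟩ := Fin.exists_castSucc_eq.2 hne
      rw [Fin.snoc_castSucc, Fin.snoc_castSucc] at hj
      exact Finset.mem_image_of_mem _ (Finset.mem_filter.2 ⟨Finset.mem_univ k, hj.2⟩)
  exact le_trans (Finset.card_le_card hsub) (le_trans Finset.card_image_le h)

lemma divmod (n m r : ℕ) (hn : 0 < n) (hr : r < n) :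
    (n * m + r) / n = m ∧ (n * m + r) % n = r := by
  constructor
  · rw [Nat.mul_add_div hn, Nat.div_eq_of_lt hr, Nat.add_zero]
  · rw [Nat.mul_add_mod, Nat.mod_eq_of_lt hr]

lemma key (n : ℕ) [NeZero n] (hn : 3 ≤ n) :
    ∀ t a d : ℕ, 1 ≤ d → d < n →
      ((d + 2 ≤ n ∨ (a + 1) % n = 1) → ∀ j, xseq n t (a+1) j ≠ xseq n t (a+1+d) j) ∧
      (Finset.univ.filter fun j => xseq n t (a+1) j = xseq n t (a+1+d) j).card ≤ 1 := by
  intro t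
  induction t with
  | zero =>
    intro a d _ _
    exact ⟨fun _ j => j.elim0, by simp⟩
  | succ t ih =>
    intro a d hd1 hd2
    have hn0 : 0 < n := by omega
    have ha : n * (a / n) + a % n = a := Nat.div_add_mod a n
    have hr : a % n < n := Nat.mod_lt _ hn0
    have hqle : a / n / n ≤ a / n := Nat.div_le_self _ _
    have hmul : n * (a/n + 1) = n * (a/n) + n := by ring
    have hc : (a/n/n) * n = n * (a/n/n) := Nat.mul_comm _ _
    have e1 : xseq n (t+1) (a+1) =
        Fin.snoc (xseq n t ((a/n/n)*n + a%n + 1)) (Fin.ofNat n (a%n + (a/n - a/n/n) : ℕ)) := by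
      simp only [xseq, Nat.add_sub_cancel]
    have e2' : xseq n (t+1) (a+1+d) =
        Fin.snoc (xseq n t (((a+d)/n/n)*n + (a+d)%n + 1))
          (Fin.ofNat n ((a+d)%n + ((a+d)/n - (a+d)/n/n) : ℕ)) := by
      rw [show a+1+d = (a+d)+1 by omega]
      simp only [xseq, Nat.add_sub_cancel]
    rcases lt_or_ge (a % n + d) n with hA | hB
    · -- Case A : no carry
      have h1 : (a+d)/n = a/n := by
        rw [show a + d = n * (a/n) + (a%n + d) by omega]
        exact (divmod n (a/n) (a%n+d) hn0 hA).1
      have h2 : (a+d)%n = a%n + d := by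
        rw [show a + d = n * (a/n) + (a%n + d) by omega]
        exact (divmod n (a/n) (a%n+d) hn0 hA).2
      rw [h1, h2] at e2'
      rw [show (a/n/n)*n + (a%n + d) + 1 = ((a/n/n)*n + a%n) + 1 + d by omega,
        show a%n + d + (a/n - a/n/n) = (a%n + (a/n - a/n/n)) + d by omega] at e2'
      have hdisj : d + 2 ≤ n ∨ ((a/n/n)*n + a%n + 1) % n = 1 := by
        rcases lt_or_ge (d+1) n with h | h
        · exact Or.inl (by omega)
        · have hr0 : a % n = 0 := by omega
          refine Or.inr ?_
          rw [hr0, Nat.add_zero, show (a/n/n)*n + 1 = n * (a/n/n) + 1 by omega]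
          exact (divmod n (a/n/n) 1 hn0 (by omega)).2
      have hpre := (ih ((a/n/n)*n + a%n) d hd1 hd2).1 hdisj
      have hlast : Fin.ofNat n ((a%n + (a/n - a/n/n)) + d : ℕ) ≠
          Fin.ofNat n ((a%n + (a/n - a/n/n)) : ℕ) := castne n _ d hd1 hd2
      have hall : ∀ j, xseq n (t+1) (a+1) j ≠ xseq n (t+1) (a+1+d) j := by
        rw [e1, e2']
        exact allne _ _ _ _ hpre (Ne.symm hlast)
      refine ⟨fun _ => hall, ?_⟩
      have h0 : (Finset.univ.filter fun j =>
          xseq n (t+1) (a+1) j = xseq n (t+1) (a+1+d) j).card = 0 := by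
        rw [Finset.card_eq_zero, Finset.filter_eq_empty_iff]
        exact fun x _ => hall x
      omega
    · -- Case B : carry
      have hrd : a % n + d - n < n := by omega
      have h1 : (a+d)/n = a/n + 1 := by
        rw [show a + d = n * (a/n + 1) + (a%n + d - n) by omega]
        exact (divmod n (a/n+1) _ hn0 hrd).1
      have h2 : (a+d)%n = a%n + d - n := by
        rw [show a + d = n * (a/n + 1) + (a%n + d - n) by omega]
        exact (divmod n (a/n+1) _ hn0 hrd).2
      have hine : (a+1) % n ≠ 1 := by
        rcases lt_or_ge (a % n + 1) n with h | h
        · have hx : (a+1) % n = a%n + 1 := by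
            rw [show a + 1 = n * (a/n) + (a%n + 1) by omega]
            exact (divmod n (a/n) _ hn0 h).2
          omega
        · have hx : (a+1) % n = 0 := by
            rw [show a + 1 = n * (a/n + 1) + 0 by omega]
            exact (divmod n (a/n+1) 0 hn0 hn0).2
          omega
      have hq : n * (a/n/n) + (a/n) % n = a/n := Nat.div_add_mod _ n
      have hqr : (a/n) % n < n := Nat.mod_lt _ hn0
      have hmul2 : n * (a/n/n + 1) = n * (a/n/n) + n := by ring
      have hc2 : (a/n/n + 1) * n = n * (a/n/n) + n := by ring
      rw [h1, h2] at e2'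
      rcases lt_or_ge ((a/n) % n + 1) n with hm | hm
      · -- B1 : q' = q
        have hq1 : (a/n + 1)/n = a/n/n := by
          rw [show a/n + 1 = n * (a/n/n) + ((a/n)%n + 1) by omega]
          exact (divmod n (a/n/n) _ hn0 hm).1
        rw [hq1] at e2'
        have hdisj : (n-d) + 2 ≤ n ∨ (((a/n/n)*n + (a%n + d - n)) + 1) % n = 1 := by
          rcases lt_or_ge 1 d with h | h
          · exact Or.inl (by omega)
          · refine Or.inr ?_
            rw [show ((a/n/n)*n + (a%n + d - n)) + 1 = n * (a/n/n) + 1 by omega]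
            exact (divmod n (a/n/n) 1 hn0 (by omega)).2
        have hpre := (ih ((a/n/n)*n + (a%n + d - n)) (n-d) (by omega) (by omega)).1 hdisj
        rw [show ((a/n/n)*n + (a%n + d - n)) + 1 + (n - d) = (a/n/n)*n + a%n + 1 by omega]
          at hpre
        have hprev : ∀ j, xseq n t ((a/n/n)*n + a%n + 1) j ≠
            xseq n t ((a/n/n)*n + (a%n+d-n) + 1) j := fun j h => hpre j h.symm
        rcases lt_or_ge (d+1) n with hcase | hcase
        · have hv : a%n + (a/n - a/n/n) = ((a%n + d - n) + (a/n + 1 - a/n/n)) + (n - 1 - d) := by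
            omega
          have hlast : Fin.ofNat n (a%n + (a/n - a/n/n) : ℕ) ≠
              Fin.ofNat n ((a%n + d - n) + (a/n + 1 - a/n/n) : ℕ) := by
            rw [hv]; exact castne n _ _ (by omega) (by omega)
          have hall : ∀ j, xseq n (t+1) (a+1) j ≠ xseq n (t+1) (a+1+d) j := by
            rw [e1, e2']
            exact allne _ _ _ _ hprev hlast
          refine ⟨fun _ => hall, ?_⟩
          have h0 : (Finset.univ.filter fun j =>
              xseq n (t+1) (a+1) j = xseq n (t+1) (a+1+d) j).card = 0 := by
            rw [Finset.card_eq_zero, Finset.filter_eq_empty_iff]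
            exact fun x _ => hall x
          omega
        · refine ⟨fun h => absurd h (by push_neg; exact ⟨by omega, hine⟩), ?_⟩
          rw [e1, e2']
          exact card_snoc_le_one_left _ _ _ _ hprev
      · -- B2 : q' = q + 1
        have hq1 : (a/n + 1)/n = a/n/n + 1 := by
          rw [show a/n + 1 = n * (a/n/n + 1) + 0 by omega]
          exact (divmod n (a/n/n+1) 0 hn0 hn0).1
        rw [hq1] at e2'
        rw [show (a/n/n + 1)*n + (a%n + d - n) + 1 = ((a/n/n)*n + a%n) + 1 + d by omega] at e2'
        have hv : a%n + (a/n - a/n/n) = ((a%n + d - n) + (a/n + 1 - (a/n/n + 1))) + (n - d) := by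
          omega
        have hlast : Fin.ofNat n (a%n + (a/n - a/n/n) : ℕ) ≠
            Fin.ofNat n ((a%n + d - n) + (a/n + 1 - (a/n/n + 1)) : ℕ) := by
          rw [hv]; exact castne n _ _ (by omega) (by omega)
        rcases lt_or_ge (d+1) n with hcase | hcase
        · have hpre := (ih ((a/n/n)*n + a%n) d hd1 hd2).1 (Or.inl (by omega))
          have hall : ∀ j, xseq n (t+1) (a+1) j ≠ xseq n (t+1) (a+1+d) j := by
            rw [e1, e2']
            exact allne _ _ _ _ hpre hlast
          refine ⟨fun _ => hall, ?_⟩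
          have h0 : (Finset.univ.filter fun j =>
              xseq n (t+1) (a+1) j = xseq n (t+1) (a+1+d) j).card = 0 := by
            rw [Finset.card_eq_zero, Finset.filter_eq_empty_iff]
            exact fun x _ => hall x
          omega
        · refine ⟨fun h => absurd h (by push_neg; exact ⟨by omega, hine⟩), ?_⟩
          rw [e1, e2']
          exact card_snoc_le_of_last _ _ _ _ hlast (ih ((a/n/n)*n + a%n) d hd1 hd2).2

theorem xseq_agreements_le {n t : ℕ} [NeZero n] (hn : 3 ≤ n) (ht1 : 1 ≤ t)
    (htn : t ≤ n) :
    (∀ i s : ℕ, 1 ≤ i → 1 ≤ s → s ≤ t - 1 → i + s ≤ n ^ t →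
        (Finset.univ.filter fun j => xseq n t i j = xseq n t (i + s) j).card ≤
          s - 1) ∧
      ∀ i : ℕ, 1 ≤ i → i + 1 ≤ n ^ t →
        ∀ j, xseq n t i j ≠ xseq n t (i + 1) j := by
  constructor
  · intro i s hi hs1 hs2 _
    obtain ⟨a, rfl⟩ : ∃ a, i = a + 1 := ⟨i - 1, by omega⟩
    have hslt : s < n := by omega
    rcases lt_or_ge (s+1) n with h | h
    · have hall := (key n hn t a s hs1 hslt).1 (Or.inl (by omega))
      have h0 : (Finset.univ.filter fun j =>
          xseq n t (a+1) j = xseq n t (a+1+s) j).card = 0 := by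
        rw [Finset.card_eq_zero, Finset.filter_eq_empty_iff]
        exact fun x _ => hall x
      omega
    · have h2 : 2 ≤ s := by omega
      have := (key n hn t a s hs1 hslt).2
      omega
  · intro i hi _ j
    obtain ⟨a, rfl⟩ : ∃ a, i = a + 1 := ⟨i - 1, by omega⟩
    exact (key n hn t a 1 le_rfl (by omega)).1 (Or.inl (by omega)) j
end
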